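/- If k ≥ 3 is an integer, ω = π − π/k, and P is a regular k-gon inscribed in a circle C, then for every point x on C there exists a wedge of angle ω with apex x containing P with both arms tangent to P; i.e., the ω-cloud of P covers all of C. -/

import Mathlib

open EuclideanGeometry Real Set
open scoped Classical

noncomputable section

abbrev Plane := EuclideanSpace ℝ (Fin 2)

/-- The unit vector in direction `θ`. -/
def unitVec (θ : ℝ) : Plane := (WithLp.equiv 2 (Fin 2 → ℝ)).symm ![Real.cos θ, Real.sin θ]

/-- The closed ray from `x` in direction `d`. -/
def ray (x d : Plane) : Set Plane := {y | ∃ t : ℝ, 0 ≤ t ∧ y = x + t • d}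

/-- The closed wedge with apex `x` bounded by the rays in directions `d₁` and `d₂`. -/
def wedgeSet (x d₁ d₂ : Plane) : Set Plane :=
  {y | ∃ s t : ℝ, 0 ≤ s ∧ 0 ≤ t ∧ y = x + s • d₁ + t • d₂}

/-- The wedge with apex `x`, arm directions `d₁`, `d₂` (unit vectors at angle `ω`),
is a minimal `ω`-wedge for `P`: it contains `P` and both arms touch `P`. -/
def IsMinWedge (P : Set Plane) (ω : ℝ) (x d₁ d₂ : Plane) : Prop :=
  ‖d₁‖ = 1 ∧ ‖d₂‖ = 1 ∧ InnerProductGeometry.angle d₁ d₂ = ω ∧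
  P ⊆ wedgeSet x d₁ d₂ ∧ (P ∩ ray x d₁).Nonempty ∧ (P ∩ ray x d₂).Nonempty

/-- The `ω`-cloud of `P`: the locus of apices of all minimal `ω`-wedges. -/
def omegaCloud (P : Set Plane) (ω : ℝ) : Set Plane := {x | ∃ d₁ d₂, IsMinWedge P ω x d₁ d₂}

/-- `V` is the vertex set of a convex polygon: at least 3 points, in strictly convex position. -/
def IsConvexPolygon (V : Finset Plane) : Prop :=
  3 ≤ V.card ∧ ∀ v ∈ V, v ∉ convexHull ℝ ((V.erase v : Finset Plane) : Set Plane)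

/-- The interior angle of a convex body `P` at a boundary point `v`, defined as the
supremum of angles `∠ a v b` over `a, b ∈ P \ {v}`. -/
def interiorAngle (P : Set Plane) (v : Plane) : ℝ :=
  sSup {θ : ℝ | ∃ a ∈ P, ∃ b ∈ P, a ≠ v ∧ b ≠ v ∧ θ = EuclideanGeometry.angle a v b}

/-- A circular arc, given by center, radius, starting angle and angular extent. -/
structure CircArc where
  center : Plane
  radius : ℝ
  start : ℝ
  delta : ℝ

/-- The (closed) point set of a circular arc. -/
def CircArc.points (A : CircArc) : Set Plane :=
  {p | ∃ θ ∈ Set.Icc A.start (A.start + A.delta), p = A.center + A.radius • unitVec θ}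

/-- The relative interior of a circular arc. -/
def CircArc.intPoints (A : CircArc) : Set Plane :=
  {p | ∃ θ ∈ Set.Ioo A.start (A.start + A.delta), p = A.center + A.radius • unitVec θ}

/-- The start point of an arc when it is traversed clockwise. -/
def CircArc.cwStart (A : CircArc) : Plane := A.center + A.radius • unitVec (A.start + A.delta)

/-- The end point of an arc when it is traversed clockwise. -/
def CircArc.cwEnd (A : CircArc) : Plane := A.center + A.radius • unitVec A.start

/-- The set of (bisector) directions of minimal `ω`-wedges of `P` with apex `x`. -/
def wedgeDirs (P : Set Plane) (ω : ℝ) (x : Plane) : Set Plane :=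
  {d | ∃ d₁ d₂, IsMinWedge P ω x d₁ d₂ ∧ d = (‖d₁ + d₂‖)⁻¹ • (d₁ + d₂)}

/-- On every interior point of the arc `A`, the minimal `ω`-wedge of `P` touches `P`
at `p` (with one arm) and `q` (with the other arm). -/
def ContactPair (P : Set Plane) (ω : ℝ) (A : CircArc) (p q : Plane) : Prop :=
  ∀ x ∈ A.intPoints, ∃ d₁ d₂, IsMinWedge P ω x d₁ d₂ ∧ p ∈ ray x d₁ ∧ q ∈ ray x d₂

open scoped RealInnerProductSpace

lemma unitVec_apply_zero (θ : ℝ) : unitVec θ 0 = Real.cos θ := rfl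
lemma unitVec_apply_one (θ : ℝ) : unitVec θ 1 = Real.sin θ := rfl

lemma norm_unitVec (θ : ℝ) : ‖unitVec θ‖ = 1 := by
  rw [EuclideanSpace.norm_eq, Fin.sum_univ_two, unitVec_apply_zero, unitVec_apply_one]
  rw [Real.norm_eq_abs, Real.norm_eq_abs, sq_abs, sq_abs,
    show Real.cos θ ^ 2 + Real.sin θ ^ 2 = 1 from Real.cos_sq_add_sin_sq θ]
  exact Real.sqrt_one

lemma inner_unitVec (α β : ℝ) : ⟪unitVec α, unitVec β⟫ = Real.cos (α - β) := by
  simp only [PiLp.inner_apply, Fin.sum_univ_two, unitVec_apply_zero, unitVec_apply_one,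
    RCLike.inner_apply, starRingEnd_apply, star_trivial, Real.cos_sub]
  ring

lemma key_cos (r u h g e : ℝ) (he : Real.sin e ≠ 0) :
    r * Real.cos (u - h + g) + (2*r*Real.sin h*Real.sin (g - e)/Real.sin e) * Real.cos (u - π/2)
      + (2*r*Real.sin h*Real.sin g/Real.sin e) * Real.cos (u - π/2 + π + e)
      = r * Real.cos (u + h + g) := by
  simp only [Real.cos_sub, Real.sin_sub, Real.cos_add, Real.sin_add, Real.cos_pi_div_two,
    Real.sin_pi_div_two, Real.cos_pi, Real.sin_pi]
  field_simp
  ring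

lemma key_sin (r u h g e : ℝ) (he : Real.sin e ≠ 0) :
    r * Real.sin (u - h + g) + (2*r*Real.sin h*Real.sin (g - e)/Real.sin e) * Real.sin (u - π/2)
      + (2*r*Real.sin h*Real.sin g/Real.sin e) * Real.sin (u - π/2 + π + e)
      = r * Real.sin (u + h + g) := by
  simp only [Real.cos_sub, Real.sin_sub, Real.cos_add, Real.sin_add, Real.cos_pi_div_two,
    Real.sin_pi_div_two, Real.cos_pi, Real.sin_pi]
  field_simp
  ring

lemma key_vec (c : Plane) (r u h g e : ℝ) (he : Real.sin e ≠ 0) :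
    c + r • unitVec (u + h + g)
      = (c + r • unitVec (u - h + g))
        + (2*r*Real.sin h*Real.sin (g - e)/Real.sin e) • unitVec (u - π/2)
        + (2*r*Real.sin h*Real.sin g/Real.sin e) • unitVec (u - π/2 + π + e) := by
  ext i
  fin_cases i
  · show c 0 + r * Real.cos (u + h + g) = c 0 + r * Real.cos (u - h + g)
      + (2*r*Real.sin h*Real.sin (g - e)/Real.sin e) * Real.cos (u - π/2)
      + (2*r*Real.sin h*Real.sin g/Real.sin e) * Real.cos (u - π/2 + π + e)
    have := key_cos r u h g e he
    linarith
  · show c 1 + r * Real.sin (u + h + g) = c 1 + r * Real.sin (u - h + g)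
      + (2*r*Real.sin h*Real.sin (g - e)/Real.sin e) * Real.sin (u - π/2)
      + (2*r*Real.sin h*Real.sin g/Real.sin e) * Real.sin (u - π/2 + π + e)
    have := key_sin r u h g e he
    linarith

lemma unitVec_periodic (θ : ℝ) (q : ℤ) : unitVec (θ + (q : ℝ) * (2 * π)) = unitVec θ := by
  unfold unitVec
  congr 1
  rw [Real.cos_add_int_mul_two_pi, Real.sin_add_int_mul_two_pi]

lemma exists_angle (c : Plane) (r : ℝ) (hr : 0 < r) (x : Plane) (hx : x ∈ Metric.sphere c r) :
    ∃ φ : ℝ, x = c + r • unitVec φ := by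
  set z : ℂ := ⟨x 0 - c 0, x 1 - c 1⟩ with hz
  have habs : ‖z‖ = r := by
    rw [Complex.norm_def, Complex.normSq_mk]
    have hd : dist x c = r := hx
    rw [EuclideanSpace.dist_eq, Fin.sum_univ_two, Real.dist_eq, Real.dist_eq,
      sq_abs, sq_abs] at hd
    rw [show (x 0 - c 0) * (x 0 - c 0) + (x 1 - c 1) * (x 1 - c 1)
      = (x 0 - c 0)^2 + (x 1 - c 1)^2 by ring]
    exact hd
  have hz0 : z ≠ 0 := by
    intro h
    rw [h] at habs
    simp at habs
    exact hr.ne' habs.symm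
  refine ⟨z.arg, ?_⟩
  have hc := Complex.cos_arg hz0
  have hs := Complex.sin_arg z
  rw [habs] at hc hs
  ext i
  fin_cases i
  · show x 0 = c 0 + r * Real.cos z.arg
    rw [hc]; field_simp [hz]
    show x 0 = c 0 + (x 0 - c 0); ring
  · show x 1 = c 1 + r * Real.sin z.arg
    rw [hs]; field_simp [hz]
    show x 1 = c 1 + (x 1 - c 1); ring

lemma convex_wedgeSet (x d₁ d₂ : Plane) : Convex ℝ (wedgeSet x d₁ d₂) := by
  rintro p ⟨s₁, t₁, hs₁, ht₁, rfl⟩ q ⟨s₂, t₂, hs₂, ht₂, rfl⟩ a b ha hb hab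
  refine ⟨a * s₁ + b * s₂, a * t₁ + b * t₂, by positivity, by positivity, ?_⟩
  have hb' : b = 1 - a := by linarith
  subst hb'
  module

set_option maxHeartbeats 1000000 in
/-- If `k ≥ 3`, `ω = π - π/k`, and `P` is a regular `k`-gon inscribed in a circle `C`, then
every point of `C` is the apex of some minimal `ω`-wedge of `P`: the `ω`-cloud covers all
of `C`. -/
theorem stmt_14 (k : ℕ) (hk : 3 ≤ k) (c : Plane) (r : ℝ) (hr : 0 < r) (θ₀ : ℝ)
    (V : Finset Plane)
    (hVdef : (V : Set Plane) =
      {p | ∃ i : Fin k, p = c + r • unitVec (θ₀ + 2 * π * ((i : ℕ) : ℝ) / (k : ℝ))}) :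
    ∀ x ∈ Metric.sphere c r,
      x ∈ omegaCloud (convexHull ℝ (V : Set Plane)) (π - π / (k : ℝ)) := by
  intro x hx
  have hkR : (0:ℝ) < (k:ℝ) := by exact_mod_cast (by omega : 0 < k)
  have hkZ : (0:ℤ) < (k:ℤ) := by exact_mod_cast (by omega : 0 < k)
  have hkR' : (k:ℝ) ≠ 0 := hkR.ne'
  set e : ℝ := π / k with he_def
  clear_value e
  have he : 0 < e := by rw [he_def]; positivity
  have he3 : e ≤ π / 3 := by
    rw [he_def]
    apply div_le_div_of_nonneg_left pi_pos.le (by norm_num)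
    exact_mod_cast hk
  have heπ : e < π := by linarith [pi_pos]
  have hse : 0 < Real.sin e := Real.sin_pos_of_pos_of_lt_pi he heπ
  obtain ⟨φ, hφ⟩ := exists_angle c r hr x hx
  set n : ℤ := ⌊(φ - θ₀) * k / (2 * π)⌋ with hn_def
  set a : ℝ := θ₀ + 2 * π * (n : ℝ) / k with ha_def
  clear_value a
  have h2π : (0:ℝ) < 2 * π := by positivity
  have ha : a ≤ φ := by
    have hfl := Int.floor_le ((φ - θ₀) * k / (2 * π))
    rw [← hn_def, le_div_iff₀ h2π] at hfl
    rw [ha_def]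
    have : 2 * π * (n : ℝ) / k ≤ φ - θ₀ := by
      rw [div_le_iff₀ hkR]
      nlinarith
    linarith
  have hb : φ < a + 2 * e := by
    have hfl := Int.lt_floor_add_one ((φ - θ₀) * k / (2 * π))
    rw [← hn_def, div_lt_iff₀ h2π] at hfl
    have h1 : φ - θ₀ < (2 * π * (n : ℝ) + 2 * π) / k := by
      rw [lt_div_iff₀ hkR]
      nlinarith
    have hsplit : (2 * π * (n : ℝ) + 2 * π) / k = 2 * π * (n : ℝ) / k + 2 * (π / k) := by
      ring
    rw [ha_def, he_def]
    linarith [hsplit ▸ h1]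
  have hφa0 : 0 ≤ (φ - a) / 2 := by linarith
  have hφae : (φ - a) / 2 < e := by linarith
  clear_value n
  set ψ : ℝ := (φ + a) / 2 - π / 2 with hψ_def
  clear_value ψ
  -- the master identity
  have main : ∀ g : ℝ, c + r • unitVec (a + 2 * g)
      = x + (2*r*Real.sin (g - (φ - a)/2) * Real.sin (g - e)/Real.sin e) • unitVec ψ
          + (2*r*Real.sin (g - (φ - a)/2) * Real.sin g/Real.sin e) • unitVec (ψ + π + e) := by
    intro g
    have hkv := key_vec c r ((φ + a)/2) (g - (φ - a)/2) g e hse.ne'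
    rw [show (φ + a)/2 + (g - (φ - a)/2) + g = a + 2 * g by ring,
        show (φ + a)/2 - (g - (φ - a)/2) + g = φ by ring] at hkv
    rw [← hφ, ← hψ_def] at hkv
    exact hkv
  -- membership of vertices of the polygon
  have hmem : ∀ mq : ℤ, c + r • unitVec (θ₀ + 2 * π * ((mq : ℤ) : ℝ) / k) ∈ (V : Set Plane) := by
    intro mq
    rw [hVdef]
    have h1 : 0 ≤ mq % k := Int.emod_nonneg _ hkZ.ne'
    have h2 : mq % k < k := Int.emod_lt_of_pos _ hkZ
    refine ⟨⟨(mq % k).toNat, by omega⟩, ?_⟩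
    have hdiv : (k:ℤ) * (mq / k) + mq % k = mq := Int.mul_ediv_add_emod _ _
    have hdivR : (k:ℝ) * ((mq / k : ℤ) : ℝ) + ((mq % k : ℤ) : ℝ) = (mq : ℝ) := by
      exact_mod_cast hdiv
    have hcast : (((⟨(mq % k).toNat, by omega⟩ : Fin k) : ℕ) : ℝ) = ((mq % k : ℤ) : ℝ) := by
      exact_mod_cast Int.toNat_of_nonneg h1
    rw [hcast,
      show θ₀ + 2 * π * ((mq : ℤ) : ℝ) / k
        = (θ₀ + 2 * π * ((mq % k : ℤ) : ℝ) / k) + ((mq / k : ℤ) : ℝ) * (2 * π) by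
          field_simp
          linear_combination (-2 * π) * hdivR,
      unitVec_periodic]
  refine ⟨unitVec ψ, unitVec (ψ + π + e), norm_unitVec _, norm_unitVec _, ?_, ?_, ?_, ?_⟩
  · -- the angle
    unfold InnerProductGeometry.angle
    rw [inner_unitVec, norm_unitVec, norm_unitVec, mul_one, div_one,
      show ψ - (ψ + π + e) = -(π + e) by ring]
    have hcos : Real.cos (-(π + e)) = -Real.cos e := by
      rw [Real.cos_neg, Real.cos_add, Real.cos_pi, Real.sin_pi]; ring
    rw [hcos, Real.arccos_neg, Real.arccos_cos he.le heπ.le, he_def]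
  · -- containment of the hull
    apply convexHull_min ?_ (convex_wedgeSet x _ _)
    intro p hp
    rw [hVdef] at hp
    obtain ⟨i, rfl⟩ := hp
    have h1 : 0 ≤ ((i:ℤ) - n) % k := Int.emod_nonneg _ hkZ.ne'
    have h2 : ((i:ℤ) - n) % k < k := Int.emod_lt_of_pos _ hkZ
    set m : ℤ := ((i:ℤ) - n) % k with hm_def
    set q : ℤ := ((i:ℤ) - n) / k with hq_def
    have hdiv : (k:ℤ) * q + m = (i:ℤ) - n := Int.mul_ediv_add_emod _ _
    have hdivR : (k:ℝ) * (q : ℝ) + (m : ℝ) = ((i:ℕ) : ℝ) - (n : ℝ) := by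
      exact_mod_cast hdiv
    have hrep : unitVec (θ₀ + 2 * π * ((i:ℕ) : ℝ) / k) = unitVec (a + 2 * ((m:ℝ) * e)) := by
      rw [show θ₀ + 2 * π * ((i:ℕ) : ℝ) / k = (a + 2 * ((m:ℝ) * e)) + (q : ℝ) * (2 * π) by
        rw [ha_def, he_def]
        field_simp
        linear_combination (-2 * π) * hdivR]
      exact unitVec_periodic _ _
    rw [hrep]
    set g : ℝ := (m:ℝ) * e with hg_def
    clear_value g
    refine ⟨2*r*Real.sin (g - (φ - a)/2) * Real.sin (g - e)/Real.sin e,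
            2*r*Real.sin (g - (φ - a)/2) * Real.sin g/Real.sin e, ?_, ?_, main g⟩
    · -- 0 ≤ s
      rcases eq_or_lt_of_le h1 with hm1 | hm1
      · -- m = 0
        have hg0 : g = 0 := by rw [hg_def, ← hm1]; norm_num
        have hsφ : 0 ≤ Real.sin ((φ - a)/2) :=
          Real.sin_nonneg_of_nonneg_of_le_pi hφa0 (by linarith)
        rw [hg0, show 2*r*Real.sin (0 - (φ - a)/2) * Real.sin (0 - e)/Real.sin e
            = 2*r*Real.sin ((φ - a)/2) from by
          rw [zero_sub, zero_sub, Real.sin_neg, Real.sin_neg]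
          field_simp [hse.ne']
          try ring]
        exact mul_nonneg (by positivity) hsφ
      · -- 1 ≤ m
        have hm1' : (1:ℝ) ≤ (m:ℝ) := by exact_mod_cast hm1
        have hmk' : (m:ℝ) ≤ (k:ℝ) - 1 := by
          have : m ≤ (k:ℤ) - 1 := by omega
          exact_mod_cast this
        have hgπ : g ≤ π - e := by
          rw [hg_def, he_def]
          have : (m:ℝ) * (π/k) ≤ ((k:ℝ) - 1) * (π/k) :=
            mul_le_mul_of_nonneg_right hmk' (by positivity)
          have hid : ((k:ℝ) - 1) * (π/k) = π - π/k := by field_simp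
          linarith [hid ▸ this]
        have hge : e ≤ g := by
          have h1e := mul_le_mul_of_nonneg_right hm1' he.le
          rw [hg_def]
          linarith
        have hsh : 0 ≤ Real.sin (g - (φ - a)/2) :=
          Real.sin_nonneg_of_nonneg_of_le_pi (by linarith) (by linarith)
        have hsge : 0 ≤ Real.sin (g - e) :=
          Real.sin_nonneg_of_nonneg_of_le_pi (by linarith) (by linarith)
        have h2r : (0:ℝ) ≤ 2 * r := by linarith
        apply div_nonneg _ hse.le
        apply mul_nonneg (mul_nonneg h2r hsh) hsge
    · -- 0 ≤ t
      rcases eq_or_lt_of_le h1 with hm1 | hm1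
      · have hg0 : g = 0 := by rw [hg_def, ← hm1]; norm_num
        rw [hg0, Real.sin_zero, mul_zero, zero_div]
      · have hm1' : (1:ℝ) ≤ (m:ℝ) := by exact_mod_cast hm1
        have hmk' : (m:ℝ) ≤ (k:ℝ) - 1 := by
          have : m ≤ (k:ℤ) - 1 := by omega
          exact_mod_cast this
        have hgπ : g ≤ π - e := by
          rw [hg_def, he_def]
          have : (m:ℝ) * (π/k) ≤ ((k:ℝ) - 1) * (π/k) :=
            mul_le_mul_of_nonneg_right hmk' (by positivity)
          have hid : ((k:ℝ) - 1) * (π/k) = π - π/k := by field_simp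
          linarith [hid ▸ this]
        have hge : e ≤ g := by
          have h1e := mul_le_mul_of_nonneg_right hm1' he.le
          rw [hg_def]
          linarith
        have hsh : 0 ≤ Real.sin (g - (φ - a)/2) :=
          Real.sin_nonneg_of_nonneg_of_le_pi (by linarith) (by linarith)
        have hsg : 0 ≤ Real.sin g :=
          Real.sin_nonneg_of_nonneg_of_le_pi (by linarith) (by linarith)
        have h2r : (0:ℝ) ≤ 2 * r := by linarith
        apply div_nonneg _ hse.le
        apply mul_nonneg (mul_nonneg h2r hsh) hsg
  · -- first contact: vertex at angle a, on ray d₁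
    have hm0 := main 0
    have hc1 : 2*r*Real.sin (0 - (φ - a)/2) * Real.sin (0 - e)/Real.sin e
        = 2*r*Real.sin ((φ - a)/2) := by
      rw [zero_sub, zero_sub, Real.sin_neg, Real.sin_neg]
      field_simp [hse.ne']
      try ring
    have hc2 : 2*r*Real.sin (0 - (φ - a)/2) * Real.sin 0/Real.sin e = 0 := by
      rw [Real.sin_zero, mul_zero, zero_div]
    rw [hc1, hc2, zero_smul, add_zero, show a + 2 * (0:ℝ) = a by ring] at hm0
    refine ⟨c + r • unitVec a, ?_, ?_⟩
    · apply subset_convexHull ℝ (V : Set Plane)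
      have := hmem n
      rwa [← ha_def] at this
    · refine ⟨2*r*Real.sin ((φ - a)/2), ?_, hm0⟩
      have hsφ : 0 ≤ Real.sin ((φ - a)/2) :=
        Real.sin_nonneg_of_nonneg_of_le_pi hφa0 (by linarith)
      exact mul_nonneg (by positivity) hsφ
  · -- second contact: vertex at angle a + 2e, on ray d₂
    have hm1 := main e
    have hc1 : 2*r*Real.sin (e - (φ - a)/2) * Real.sin (e - e)/Real.sin e = 0 := by
      rw [sub_self, Real.sin_zero, mul_zero, zero_div]
    have hc2 : 2*r*Real.sin (e - (φ - a)/2) * Real.sin e/Real.sin e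
        = 2*r*Real.sin (e - (φ - a)/2) := by
      rw [mul_div_assoc, div_self hse.ne', mul_one]
    rw [hc1, hc2, zero_smul, add_zero] at hm1
    refine ⟨c + r • unitVec (a + 2 * e), ?_, ?_⟩
    · apply subset_convexHull ℝ (V : Set Plane)
      have := hmem (n + 1)
      rwa [show θ₀ + 2 * π * (((n:ℤ) + 1 : ℤ) : ℝ) / k = a + 2 * e by
        rw [ha_def, he_def]; push_cast; field_simp; ring] at this
    · refine ⟨2*r*Real.sin (e - (φ - a)/2), ?_, hm1⟩
      have hsφ : 0 ≤ Real.sin (e - (φ - a)/2) :=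
        Real.sin_nonneg_of_nonneg_of_le_pi (by linarith) (by linarith)
      exact mul_nonneg (by positivity) hsφ
end
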